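/- Let W, V be n×n real symmetric matrices (or vectors in ℝⁿ viewed as diagonal matrices). If σ₁(W) ≠ 0, σ₂(W) ≥ 0, and the polarized form σ₂(V,W) = 0, then σ₂(V,V) ≤ 0. -/

import Mathlib

open Finset

/-- First elementary symmetric polynomial. -/
def sigma1 {n : ℕ} (κ : Fin n → ℝ) : ℝ := ∑ i, κ i

/-- Second elementary symmetric polynomial. -/
def sigma2 {n : ℕ} (κ : Fin n → ℝ) : ℝ :=
  ∑ p ∈ Finset.univ.filter (fun p : Fin n × Fin n => p.1 < p.2), κ p.1 * κ p.2

/-- Third elementary symmetric polynomial. -/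
def sigma3 {n : ℕ} (κ : Fin n → ℝ) : ℝ :=
  ∑ p ∈ Finset.univ.filter
      (fun p : Fin n × Fin n × Fin n => p.1 < p.2.1 ∧ p.2.1 < p.2.2),
    κ p.1 * κ p.2.1 * κ p.2.2

/-- Polarized form of `2 * sigma2` : `Q x y = ∑_{i ≠ j} x i * y j`. -/
def polarQ {n : ℕ} (x y : Fin n → ℝ) : ℝ :=
  ∑ p ∈ Finset.univ.offDiag, x p.1 * y p.2

lemma polarQ_eq {n : ℕ} (x y : Fin n → ℝ) :
    polarQ x y = sigma1 x * sigma1 y - ∑ i, x i * y i := by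
  have h := Finset.sum_union (Finset.disjoint_diag_offDiag (univ : Finset (Fin n)))
    (f := fun p : Fin n × Fin n => x p.1 * y p.2)
  rw [Finset.diag_union_offDiag, Finset.sum_diag] at h
  have hp : ∑ p ∈ (univ ×ˢ univ : Finset (Fin n × Fin n)), x p.1 * y p.2
      = sigma1 x * sigma1 y := by
    rw [Finset.sum_product, sigma1, sigma1, Finset.sum_mul]
    simp [Finset.mul_sum]
  simp only at h
  unfold polarQ
  linarith [h, hp]

lemma polarQ_self {n : ℕ} (κ : Fin n → ℝ) : polarQ κ κ = 2 * sigma2 κ := by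
  have hsplit : (univ : Finset (Fin n)).offDiag =
      ((univ : Finset (Fin n × Fin n)).filter (fun p => p.1 < p.2)) ∪
      ((univ : Finset (Fin n × Fin n)).filter (fun p => p.2 < p.1)) := by
    ext p
    simp only [Finset.mem_offDiag, Finset.mem_union, Finset.mem_filter,
      Finset.mem_univ, true_and]
    exact ne_iff_lt_or_gt
  have hdisj : Disjoint ((univ : Finset (Fin n × Fin n)).filter (fun p => p.1 < p.2))
      ((univ : Finset (Fin n × Fin n)).filter (fun p => p.2 < p.1)) := by
    rw [Finset.disjoint_filter]
    intro p _ h1 h2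
    exact absurd h1 (not_lt_of_gt h2)
  have hswap : ∑ p ∈ (univ : Finset (Fin n × Fin n)).filter (fun p => p.2 < p.1),
      κ p.1 * κ p.2
      = ∑ p ∈ (univ : Finset (Fin n × Fin n)).filter (fun p => p.1 < p.2),
      κ p.1 * κ p.2 := by
    apply Finset.sum_nbij' (fun p => (p.2, p.1)) (fun p => (p.2, p.1)) <;>
      simp [mul_comm]
  unfold polarQ sigma2
  rw [hsplit, Finset.sum_union hdisj, hswap]
  ring

/-- If `σ₁(W) ≠ 0`, `σ₂(W) ≥ 0` and the polarized form `σ₂(V,W) = 0`,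
then `σ₂(V,V) ≤ 0`. -/
theorem stmt0 {n : ℕ} (W V : Fin n → ℝ)
    (h1 : sigma1 W ≠ 0) (h2 : 0 ≤ sigma2 W) (h3 : polarQ V W = 0) :
    polarQ V V ≤ 0 := by
  set t : ℝ := - sigma1 V / sigma1 W with ht
  set U : Fin n → ℝ := fun i => V i + t * W i with hU
  have hsU : sigma1 U = sigma1 V + t * sigma1 W := by
    unfold sigma1
    simp [hU, Finset.sum_add_distrib, Finset.mul_sum]
  have hsU0 : sigma1 U = 0 := by
    rw [hsU, ht]
    field_simp
    ring
  have hd : ∑ i, U i * U i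
      = ∑ i, V i * V i + 2 * t * ∑ i, V i * W i + t ^ 2 * ∑ i, W i * W i := by
    have h : ∀ i, U i * U i
        = V i * V i + 2 * t * (V i * W i) + t ^ 2 * (W i * W i) := fun i => by
      simp only [hU]; ring
    simp_rw [h]
    rw [Finset.sum_add_distrib, Finset.sum_add_distrib, ← Finset.mul_sum, ← Finset.mul_sum]
  have hQU : polarQ U U = polarQ V V + 2 * t * polarQ V W + t ^ 2 * polarQ W W := by
    rw [polarQ_eq, polarQ_eq, polarQ_eq, polarQ_eq, hd, hsU]
    ring
  have hUU : polarQ U U ≤ 0 := by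
    rw [polarQ_eq, hsU0]
    have : (0:ℝ) ≤ ∑ i, U i * U i :=
      Finset.sum_nonneg fun i _ => mul_self_nonneg _
    linarith
  have hWW : 0 ≤ polarQ W W := by
    rw [polarQ_self]; linarith
  rw [h3] at hQU
  have hnn : 0 ≤ t ^ 2 * polarQ W W := mul_nonneg (sq_nonneg t) hWW
  linarith
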